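/- Let M be an n×n nonnegative matrix with nonzero diagonal entries, supp(M) = supp(Mᵀ), M symmetric and M fully indecomposable, and let v ∈ ℝⁿ be strictly positive. If positive diagonal matrices D_ℓ, D_r satisfy (D_ℓ M D_r)·1ₙ = v and 1ₙᵀ·(D_ℓ M D_r) = vᵀ, then there exists a positive diagonal matrix D such that D M D = D_ℓ M D_r. -/

import Mathlib

open Matrix Finset

/-- A square nonnegative matrix `M` (on index type `ι`) is fully
indecomposable if there exist no nonempty subsets `R` of rows and `C` of
columns with `|R| + |C| = n` and `M i j = 0` for all `i ∈ R`, `j ∈ C`.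
This is equivalent to: there are no permutation matrices `P, Q` with
`P M Q` block upper triangular with square diagonal blocks of positive
sizes. -/
def FullyIndecomposable {ι : Type*} [Fintype ι] (M : Matrix ι ι ℝ) : Prop :=
  ¬ ∃ (R C : Finset ι), R.Nonempty ∧ C.Nonempty ∧
      R.card + C.card = Fintype.card ι ∧ ∀ i ∈ R, ∀ j ∈ C, M i j = 0

/-- If a symmetric, fully indecomposable nonnegative matrix `M` with nonzero
diagonal entries and symmetric support is scaled by positive diagonal matrices
`D_ℓ, D_r` so that `D_ℓ M D_r` has common row- and column-sum vector `v`, then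
there is a single positive diagonal `D` with `D M D = D_ℓ M D_r`. -/
theorem exists_symmetric_scaling
    {n : ℕ} (M : Matrix (Fin n) (Fin n) ℝ)
    (hM : ∀ i j, 0 ≤ M i j)
    (hdiag : ∀ i, M i i ≠ 0)
    (hsupp : ∀ i j, M i j ≠ 0 ↔ M j i ≠ 0)
    (hMsymm : Mᵀ = M)
    (hfull : FullyIndecomposable M)
    (v : Fin n → ℝ) (hv : ∀ i, 0 < v i)
    (dℓ dr : Fin n → ℝ) (hdℓ : ∀ i, 0 < dℓ i) (hdr : ∀ j, 0 < dr j)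
    (hrow : ∀ i, ∑ j, (diagonal dℓ * M * diagonal dr) i j = v i)
    (hcol : ∀ j, ∑ i, (diagonal dℓ * M * diagonal dr) i j = v j) :
    ∃ d : Fin n → ℝ, (∀ i, 0 < d i) ∧
      diagonal d * M * diagonal d = diagonal dℓ * M * diagonal dr := by
  have hB : ∀ i j, (diagonal dℓ * M * diagonal dr) i j = dℓ i * M i j * dr j := by
    intro i j
    rw [Matrix.mul_diagonal, Matrix.diagonal_mul]
  have hsym : ∀ i j, M i j = M j i := by
    intro i j
    exact (congrFun (congrFun hMsymm j) i).symm ▸ rfl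
  have hrow' : ∀ i, ∑ j, dℓ i * M i j * dr j = v i := by
    intro i; rw [← hrow i]; exact Finset.sum_congr rfl fun j _ => (hB i j).symm
  have hcol' : ∀ j, ∑ i, dℓ i * M i j * dr j = v j := by
    intro j; rw [← hcol j]; exact Finset.sum_congr rfl fun i _ => (hB i j).symm
  have hrow2 : ∀ i, ∑ j, dr i * M i j * dℓ j = v i := by
    intro i
    rw [← hcol' i]
    refine Finset.sum_congr rfl fun j _ => ?_
    rw [hsym i j]; ring
  rcases isEmpty_or_nonempty (Fin n) with hn | hn
  · exact ⟨dℓ, hdℓ, by ext i j; exact (hn.false i).elim⟩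
  set e : Fin n → ℝ := fun i => dr i / dℓ i with he
  have hdre : ∀ k, dr k = e k * dℓ k := by
    intro k
    exact (div_mul_cancel₀ (dr k) (hdℓ k).ne').symm
  obtain ⟨i0, -, hi0⟩ := Finset.exists_max_image Finset.univ e ⟨Classical.arbitrary _, mem_univ _⟩
  have key : ∀ i, e i = e i0 → ∀ j, M i j ≠ 0 → e j = e i0 := by
    intro i hi j hj
    have hterm : ∀ k, dℓ i * (M i k * dℓ k * (e i0 - e k))
        = dr i * M i k * dℓ k - dℓ i * M i k * dr k := by
      intro k
      rw [hdre i, hdre k, hi]; ring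
    have hsum0 : ∑ k, dℓ i * (M i k * dℓ k * (e i0 - e k)) = 0 := by
      calc ∑ k, dℓ i * (M i k * dℓ k * (e i0 - e k))
          = ∑ k, (dr i * M i k * dℓ k - dℓ i * M i k * dr k) :=
            Finset.sum_congr rfl fun k _ => hterm k
        _ = (∑ k, dr i * M i k * dℓ k) - ∑ k, dℓ i * M i k * dr k :=
            Finset.sum_sub_distrib _ _
        _ = 0 := by rw [hrow2 i, hrow' i, sub_self]
    rw [← Finset.mul_sum] at hsum0
    have hsum0' : ∑ k, M i k * dℓ k * (e i0 - e k) = 0 :=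
      (mul_eq_zero.1 hsum0).resolve_left (hdℓ i).ne'
    have hnn : ∀ k ∈ Finset.univ, 0 ≤ M i k * dℓ k * (e i0 - e k) := by
      intro k _
      exact mul_nonneg (mul_nonneg (hM i k) (hdℓ k).le)
        (sub_nonneg.2 (hi0 k (mem_univ k)))
    have hz := (Finset.sum_eq_zero_iff_of_nonneg hnn).1 hsum0' j (mem_univ j)
    rcases mul_eq_zero.1 hz with h | h
    · rcases mul_eq_zero.1 h with h' | h'
      · exact absurd h' hj
      · exact absurd h' (hdℓ j).ne'
    · linarith [sub_eq_zero.1 h]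
  by_cases hall : ∀ i, e i = e i0
  · have hα : 0 < e i0 := div_pos (hdr i0) (hdℓ i0)
    refine ⟨fun i => Real.sqrt (e i0) * dℓ i,
      fun i => mul_pos (Real.sqrt_pos.2 hα) (hdℓ i), ?_⟩
    ext i j
    rw [Matrix.mul_diagonal, Matrix.diagonal_mul, Matrix.mul_diagonal,
      Matrix.diagonal_mul, hdre j, hall j]
    have hs : Real.sqrt (e i0) * Real.sqrt (e i0) = e i0 := Real.mul_self_sqrt hα.le
    linear_combination dℓ i * M i j * dℓ j * hs
  · push_neg at hall
    obtain ⟨k, hk⟩ := hall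
    exfalso
    apply hfull
    refine ⟨Finset.univ.filter (fun i => e i = e i0),
      Finset.univ.filter (fun i => ¬ e i = e i0),
      ⟨i0, by simp⟩, ⟨k, by simp [hk]⟩, ?_, ?_⟩
    · rw [Finset.card_filter_add_card_filter_not, Finset.card_univ]
    · intro i hi j hj
      by_contra hM0
      exact (mem_filter.1 hj).2 (key i (mem_filter.1 hi).2 j hM0)
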